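/- There exist three soft sets (F,A), (G,B), (H,C) over a universe of 5 elements and parameter set of 3 elements such that the Euclidean soft-set distance e((F,A),(H,C)) > e((F,A),(G,B)) + e((G,B),(H,C)); that is, e fails the triangle inequality. Concretely, with F(α₁)={x₁,x₂} on A={α₁}; G(α₂)={x₂,x₃}, G(α₃)={x₁,x₄} on B={α₂,α₃}; H(α₁)={x₃,x₄,x₅}, H(α₂)={x₂,x₃}, H(α₃)={x₁,x₃,x₄} on C={α₁,α₂,α₃}, one has e((F,A),(G,B))=3, e((G,B),(H,C))=2, e((F,A),(H,C))=7. -/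

import Mathlib

/-- Euclidean distance between soft sets over universe `X` and parameter type `P`. -/
noncomputable def softEuclDist {X P : Type*} [DecidableEq X] [DecidableEq P]
    (F : P → Finset X) (A : Finset P) (G : P → Finset X) (B : Finset P) : ℝ :=
  ((symmDiff A B).card : ℝ) +
    Real.sqrt (∑ α ∈ A ∩ B, ((symmDiff (F α) (G α)).card : ℝ) ^ 2)

theorem euclidean_soft_distance_fails_triangle :
    ∃ (F G H : Fin 3 → Finset (Fin 5)) (A B C : Finset (Fin 3)),
      A = {0} ∧ B = {1, 2} ∧ C = {0, 1, 2} ∧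
      F 0 = {0, 1} ∧
      G 1 = {1, 2} ∧ G 2 = {0, 3} ∧
      H 0 = {2, 3, 4} ∧ H 1 = {1, 2} ∧ H 2 = {0, 2, 3} ∧
      softEuclDist F A G B = 3 ∧
      softEuclDist G B H C = 2 ∧
      softEuclDist F A H C = 7 ∧
      softEuclDist F A H C > softEuclDist F A G B + softEuclDist G B H C := by
  have key : softEuclDist ![({0,1} : Finset (Fin 5)), ∅, ∅] {0} ![∅, {1,2}, {0,3}] {1,2} = 3 ∧
      softEuclDist ![(∅ : Finset (Fin 5)), {1,2}, {0,3}] {1,2} ![{2,3,4}, {1,2}, {0,2,3}] {0,1,2} = 2 ∧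
      softEuclDist ![({0,1} : Finset (Fin 5)), ∅, ∅] {0} ![{2,3,4}, {1,2}, {0,2,3}] {0,1,2} = 7 := by
    refine ⟨?_, ?_, ?_⟩
    · have hAB : (symmDiff ({0} : Finset (Fin 3)) {1,2}).card = 3 := by decide
      have hI : ({0} : Finset (Fin 3)) ∩ {1,2} = ∅ := by decide
      unfold softEuclDist
      rw [hAB, hI]
      norm_num
    · have hBC : (symmDiff ({1,2} : Finset (Fin 3)) {0,1,2}).card = 1 := by decide
      have hI : ({1,2} : Finset (Fin 3)) ∩ {0,1,2} = {1,2} := by decide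
      unfold softEuclDist
      rw [hBC, hI]
      have h1 : (symmDiff ({1,2} : Finset (Fin 5)) {1,2}).card = 0 := by decide
      have h2 : (symmDiff ({0,3} : Finset (Fin 5)) {0,2,3}).card = 1 := by decide
      rw [show ({1,2} : Finset (Fin 3)) = {1,2} from rfl]
      rw [Finset.sum_insert (by decide), Finset.sum_singleton]
      simp only [Matrix.cons_val_one, Matrix.head_cons, Matrix.cons_val_two, Matrix.tail_cons, Matrix.cons_val_zero]
      rw [h1, h2]
      norm_num [Real.sqrt_one]
    · have hAC : (symmDiff ({0} : Finset (Fin 3)) {0,1,2}).card = 2 := by decide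
      have hI : ({0} : Finset (Fin 3)) ∩ {0,1,2} = {0} := by decide
      unfold softEuclDist
      rw [hAC, hI, Finset.sum_singleton]
      simp only [Matrix.cons_val_zero]
      have h1 : (symmDiff ({0,1} : Finset (Fin 5)) {2,3,4}).card = 5 := by decide
      rw [h1]
      rw [show ((5:ℕ):ℝ)^2 = 25 by norm_num, show (25:ℝ) = 5^2 by norm_num,
        Real.sqrt_sq (by norm_num)]
      norm_num
  exact ⟨![{0,1}, ∅, ∅], ![∅, {1,2}, {0,3}], ![{2,3,4}, {1,2}, {0,2,3}],
    {0}, {1,2}, {0,1,2}, rfl, rfl, rfl, rfl, rfl, rfl, rfl, rfl, rfl, key.1, key.2.1, key.2.2,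
    by rw [key.1, key.2.1, key.2.2]; norm_num⟩
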